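/- arXiv:1709.09507 — 2 statements merged into one kernel-verified Lean document; each statement's English description precedes it below -/
import Mathlib

section
/- Let h₁,…,h_k be proper closed convex functions on a finite-dimensional Hilbert space X, x₀ ∈ X, S ⊆ {1,…,k}, and fix {z_i}_{i∉S}. If {z_i*}_{i∈S} minimizes Σ_{i∈S} h_i*(z_i) + ½‖−Σ_{i∈S} z_i − Σ_{i∉S} z_i + x₀‖² over {z_i}_{i∈S}, then x* := x₀ − Σ_{i∈S} z_i* − Σ_{i∉S} z_i is the (unique) minimizer of x ↦ Σ_{i∈S} h_i(x) + ½‖x − (x₀ − Σ_{i∉S} z_i)‖². -/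
open RealInnerProductSpace Filter Topology

/-- Fenchel conjugate of an extended-real-valued function on a real inner product space. -/
noncomputable def fenchelConj {X : Type*} [NormedAddCommGroup X] [InnerProductSpace ℝ X]
    (f : X → EReal) (z : X) : EReal :=
  ⨆ x : X, ((⟪z, x⟫ : ℝ) : EReal) - f x

/-- A proper function: not identically `⊤` and never `⊥`. -/
def ProperFn {X : Type*} (f : X → EReal) : Prop :=
  (∃ x, f x ≠ ⊤) ∧ ∀ x, f x ≠ ⊥

/-- Convexity for extended-real-valued functions. -/
def ConvexFnE {X : Type*} [AddCommGroup X] [Module ℝ X] (f : X → EReal) : Prop :=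
  ∀ x y : X, ∀ t : ℝ, 0 < t → t < 1 →
    f (t • x + (1 - t) • y) ≤ (t : EReal) * f x + ((1 - t : ℝ) : EReal) * f y

/-- `z` is a subgradient of `f` at `x`. -/
def IsSubgrad {X : Type*} [NormedAddCommGroup X] [InnerProductSpace ℝ X]
    (f : X → EReal) (x z : X) : Prop :=
  ∀ y : X, f x + ((⟪z, y - x⟫ : ℝ) : EReal) ≤ f y

section Aux

open Metric

lemma ESum.sum_coe {ι : Type*} (s : Finset ι) (f : ι → EReal)
    (hf : ∀ i ∈ s, f i ≠ ⊥ ∧ f i ≠ ⊤) :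
    ∑ i ∈ s, f i = ((∑ i ∈ s, (f i).toReal : ℝ) : EReal) := by
  classical
  induction s using Finset.cons_induction with
  | empty => simp
  | cons j s hj ih =>
    have hjf := hf j (Finset.mem_cons_self j s)
    rw [Finset.sum_cons, Finset.sum_cons,
      ih (fun i hi => hf i (Finset.mem_cons_of_mem hi)), EReal.coe_add,
      EReal.coe_toReal hjf.2 hjf.1]

lemma ESum.sum_ne_bot {ι : Type*} (s : Finset ι) (f : ι → EReal)
    (hf : ∀ i ∈ s, f i ≠ ⊥) : ∑ i ∈ s, f i ≠ ⊥ := by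
  classical
  induction s using Finset.cons_induction with
  | empty => simp
  | cons j s hj ih =>
    rw [Finset.sum_cons]
    have h1 := hf j (Finset.mem_cons_self j s)
    have h2 := ih (fun i hi => hf i (Finset.mem_cons_of_mem hi))
    simp [EReal.add_eq_bot_iff, h1, h2]

lemma ESum.sum_eq_top {ι : Type*} (s : Finset ι) (f : ι → EReal)
    (hb : ∀ i ∈ s, f i ≠ ⊥) {j : ι} (hj : j ∈ s) (ht : f j = ⊤) :
    ∑ i ∈ s, f i = ⊤ := by
  classical
  rw [← Finset.add_sum_erase _ _ hj, ht]
  exact EReal.top_add_of_ne_bot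
    (ESum.sum_ne_bot _ _ (fun i hi => hb i (Finset.mem_of_mem_erase hi)))

lemma ESum.term_ne_top {ι : Type*} {s : Finset ι} {f : ι → EReal}
    (hs : ∑ i ∈ s, f i ≠ ⊤) (hb : ∀ i ∈ s, f i ≠ ⊥) {j : ι} (hj : j ∈ s) :
    f j ≠ ⊤ := fun ht => hs (ESum.sum_eq_top s f hb hj ht)

lemma lsc_exists_min_on_compact {α : Type*} [TopologicalSpace α] {s : Set α}
    (hs : IsCompact s) (hcl : IsClosed s) (hne : s.Nonempty) {φ : α → EReal}
    (hφ : LowerSemicontinuous φ) : ∃ p ∈ s, ∀ x ∈ s, φ p ≤ φ x := by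
  classical
  set m := sInf (φ '' s) with hm
  have hle : ∀ x ∈ s, m ≤ φ x := fun x hx => sInf_le ⟨x, hx, rfl⟩
  by_cases hmt : m = ⊤
  · obtain ⟨p, hp⟩ := hne
    exact ⟨p, hp, fun x hx => le_trans le_top (by rw [← hmt]; exact hle x hx)⟩
  have hmlt : m < ⊤ := lt_of_le_of_ne le_top hmt
  have hι : Nonempty {r : EReal // m < r} := ⟨⟨⊤, hmlt⟩⟩
  set t : {r : EReal // m < r} → Set α := fun r => s ∩ φ ⁻¹' Set.Iic r.1 with ht
  have htn : ∀ r, (t r).Nonempty := by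
    rintro ⟨r, hr⟩
    have h1 : sInf (φ '' s) < r := hr
    rw [sInf_lt_iff] at h1
    obtain ⟨v, ⟨x, hx, rfl⟩, hvr⟩ := h1
    exact ⟨x, hx, le_of_lt hvr⟩
  have htd : Directed (· ⊇ ·) t := by
    rintro ⟨r₁, h₁⟩ ⟨r₂, h₂⟩
    refine ⟨⟨min r₁ r₂, lt_min h₁ h₂⟩, ?_, ?_⟩
    · exact Set.inter_subset_inter_right _
        (Set.preimage_mono (Set.Iic_subset_Iic.2 (min_le_left _ _)))
    · exact Set.inter_subset_inter_right _
        (Set.preimage_mono (Set.Iic_subset_Iic.2 (min_le_right _ _)))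
  have hint := IsCompact.nonempty_iInter_of_directed_nonempty_isCompact_isClosed t htd htn
    (fun r => hs.inter_right (hφ.isClosed_preimage r.1))
    (fun r => hcl.inter (hφ.isClosed_preimage r.1))
  obtain ⟨p, hp⟩ := hint
  simp only [Set.mem_iInter] at hp
  have hps : p ∈ s := (hp ⟨⊤, hmlt⟩).1
  refine ⟨p, hps, fun x hx => le_trans ?_ (hle x hx)⟩
  by_contra hgt
  push_neg at hgt
  obtain ⟨c, hc1, hc2⟩ := exists_between hgt
  exact absurd ((hp ⟨c, hc1⟩).2 : φ p ≤ c) (not_le.2 hc2)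

variable {X : Type*} [NormedAddCommGroup X] [InnerProductSpace ℝ X]

lemma conj_ne_bot {f : X → EReal} (hp : ProperFn f) (w : X) : fenchelConj f w ≠ ⊥ := by
  obtain ⟨⟨x₁, hx₁⟩, hbot⟩ := hp
  have h1 : ((⟪w, x₁⟫ : ℝ) : EReal) - f x₁ ≤ fenchelConj f w :=
    le_iSup (fun x => ((⟪w, x⟫ : ℝ) : EReal) - f x) x₁
  have h2 : ((⟪w, x₁⟫ : ℝ) : EReal) - f x₁ = ((⟪w, x₁⟫ - (f x₁).toReal : ℝ) : EReal) := by
    rw [EReal.coe_sub, EReal.coe_toReal hx₁ (hbot x₁)]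
  intro hB
  rw [hB, le_bot_iff, h2] at h1
  exact EReal.coe_ne_bot _ h1

lemma affine_minorant [FiniteDimensional ℝ X] {f : X → EReal} (hp : ProperFn f)
    (hl : LowerSemicontinuous f) (hc : ConvexFnE f) :
    ∃ (w : X) (B C : ℝ), 0 ≤ C ∧ f w ≠ ⊤ ∧
      ∀ x, ((B - C * ‖x - w‖ : ℝ) : EReal) ≤ f x := by
  obtain ⟨⟨xb, hxb⟩, hbot⟩ := id hp
  set F : ℝ := (f xb).toReal with hF
  have hfxb : f xb = (F : EReal) := (EReal.coe_toReal hxb (hbot xb)).symm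
  obtain ⟨p₀, hp₀mem, hp₀min⟩ := lsc_exists_min_on_compact (isCompact_closedBall xb 1)
    isClosed_closedBall ⟨xb, mem_closedBall_self zero_le_one⟩ hl
  have hfp₀le : f p₀ ≤ (F : EReal) := by
    rw [← hfxb]; exact hp₀min xb (mem_closedBall_self zero_le_one)
  have hfp₀t : f p₀ ≠ ⊤ := by
    intro h; rw [h] at hfp₀le; exact absurd hfp₀le (by simp)
  set B : ℝ := (f p₀).toReal with hB
  have hfp₀ : f p₀ = (B : EReal) := (EReal.coe_toReal hfp₀t (hbot p₀)).symm
  have hBF : B ≤ F := by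
    rw [hfp₀] at hfp₀le; exact_mod_cast hfp₀le
  refine ⟨xb, B, F - B, by linarith, hxb, fun x => ?_⟩
  by_cases hr : ‖x - xb‖ ≤ 1
  · have hx : x ∈ closedBall xb 1 := by rwa [mem_closedBall, dist_eq_norm]
    have hfx2 : (B : EReal) ≤ f x := hfp₀ ▸ hp₀min x hx
    refine le_trans ?_ hfx2
    have h1 : (0:ℝ) ≤ (F - B) * ‖x - xb‖ := mul_nonneg (by linarith) (norm_nonneg _)
    exact_mod_cast (by linarith : B - (F - B) * ‖x - xb‖ ≤ B)
  · push_neg at hr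
    set r := ‖x - xb‖ with hrdef
    have hr0 : 0 < r := lt_trans one_pos hr
    set t := 1 / r with htdef
    have ht0 : 0 < t := by positivity
    have ht1 : t < 1 := by rw [htdef, div_lt_one hr0]; exact hr
    have hcv := hc x xb t ht0 ht1
    have hyb : t • x + (1 - t) • xb ∈ closedBall xb 1 := by
      rw [mem_closedBall, dist_eq_norm]
      have he : t • x + (1 - t) • xb - xb = t • (x - xb) := by module
      rw [he, norm_smul, Real.norm_eq_abs, abs_of_pos ht0, ← hrdef, htdef]
      rw [one_div_mul_cancel (ne_of_gt hr0)]
    by_cases hfx : f x = ⊤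
    · rw [hfx]; exact le_top
    set G := (f x).toReal with hGdef
    have hfxG : f x = (G : EReal) := (EReal.coe_toReal hfx (hbot x)).symm
    rw [hfxG, hfxb] at hcv
    have hcast : (t : EReal) * (G : EReal) + ((1 - t : ℝ) : EReal) * (F : EReal)
        = ((t * G + (1 - t) * F : ℝ) : EReal) := by
      rw [← EReal.coe_mul, ← EReal.coe_mul, ← EReal.coe_add]
    rw [hcast] at hcv
    have hlow : (B : EReal) ≤ f (t • x + (1 - t) • xb) := by
      rw [← hfp₀]; exact hp₀min _ hyb
    have hreal : B ≤ t * G + (1 - t) * F := by exact_mod_cast le_trans hlow hcv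
    rw [hfxG]
    have h2 : r * t = 1 := by rw [htdef]; field_simp
    have h1 : r * B ≤ r * (t * G + (1 - t) * F) :=
      mul_le_mul_of_nonneg_left hreal (le_of_lt hr0)
    exact_mod_cast (by nlinarith : B - (F - B) * r ≤ G)

lemma prox_key_arith (B C K d rr q : ℝ) (hC : 0 ≤ C) (hd : 0 ≤ d) (hKB : 0 ≤ K - B)
    (hs1 : 2*C + 2*(K - B) + 2*C*d + 1 ≤ rr - d)
    (hq2 : (rr - d)^2 ≤ q^2) :
    K < B - C*rr + 1/2 * q^2 := by
  have hs0 : (1:ℝ) ≤ rr - d := by nlinarith [mul_nonneg hC hd]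
  have hs_pos : (0:ℝ) ≤ rr - d := by linarith
  have e1 : (rr - d) * (2*C + 2*(K - B) + 2*C*d + 1) ≤ (rr - d)^2 := by
    nlinarith [mul_le_mul_of_nonneg_left hs1 hs_pos]
  have e2 : K - B ≤ (K - B) * (rr - d) := by nlinarith
  have e3 : C*d ≤ C*d*(rr - d) := by nlinarith [mul_nonneg hC hd]
  nlinarith [e1, e2, e3, hq2, mul_nonneg hC hs_pos]

lemma exists_prox [FiniteDimensional ℝ X] {f : X → EReal} (hp : ProperFn f)
    (hl : LowerSemicontinuous f) (hc : ConvexFnE f) (b : X) :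
    ∃ p : X, f p ≠ ⊤ ∧ ∀ x, f p + ((((1:ℝ)/2) * ‖p - b‖ ^ 2 : ℝ) : EReal)
      ≤ f x + ((((1:ℝ)/2) * ‖x - b‖ ^ 2 : ℝ) : EReal) := by
  obtain ⟨w, B, C, hC, hfw, hlow⟩ := affine_minorant hp hl hc
  have hbot := hp.2
  set φ : X → EReal := fun x => f x + ((((1:ℝ)/2) * ‖x - b‖ ^ 2 : ℝ) : EReal) with hφdef
  have hφl : LowerSemicontinuous φ := by
    apply LowerSemicontinuous.add' hl
    · exact Continuous.lowerSemicontinuous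
        (continuous_coe_real_ereal.comp (by fun_prop))
    · intro x
      exact EReal.continuousAt_add (Or.inr (EReal.coe_ne_bot _)) (Or.inr (EReal.coe_ne_top _))
  set F : ℝ := (f w).toReal with hF
  have hfweq : f w = (F : EReal) := (EReal.coe_toReal hfw (hbot w)).symm
  set d₀ : ℝ := ‖w - b‖ with hd₀
  set K : ℝ := F + (1/2) * d₀ ^ 2 with hK
  have hφw : φ w = (K : EReal) := by
    show f w + ((((1:ℝ)/2) * ‖w - b‖ ^ 2 : ℝ) : EReal) = (K : EReal)
    rw [hfweq, ← EReal.coe_add]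
  have hBF : B ≤ F := by
    have h := hlow w
    rw [sub_self, norm_zero, mul_zero, sub_zero, hfweq] at h
    exact_mod_cast h
  have hKB : 0 ≤ K - B := by
    have h2 : (0:ℝ) ≤ (1/2) * d₀ ^ 2 := by positivity
    rw [hK]; linarith
  set R : ℝ := d₀ + 2*C + 2*(K - B) + 2*C*d₀ + 1 with hR
  have hR1 : 1 ≤ R := by
    have h0 : (0:ℝ) ≤ d₀ := norm_nonneg _
    have h1 : (0:ℝ) ≤ C*d₀ := mul_nonneg hC h0
    rw [hR]; linarith
  obtain ⟨p, hpmem, hpmin⟩ := lsc_exists_min_on_compact (isCompact_closedBall w R)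
    isClosed_closedBall ⟨w, mem_closedBall_self (by linarith)⟩ hφl
  have hφpK : φ p ≤ (K : EReal) := by
    rw [← hφw]; exact hpmin w (mem_closedBall_self (by linarith))
  have hfpt : f p ≠ ⊤ := by
    intro h
    have : φ p = ⊤ := by rw [hφdef]; simp only; rw [h]; exact EReal.top_add_of_ne_bot (EReal.coe_ne_bot _)
    rw [this] at hφpK; exact absurd hφpK (by simp)
  refine ⟨p, hfpt, fun x => ?_⟩
  show φ p ≤ φ x
  by_cases hx : x ∈ closedBall w R
  · exact hpmin x hx
  · -- outside the ball : φ x > K ≥ φ p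
    have hrx : R < ‖x - w‖ := by
      rw [mem_closedBall, dist_eq_norm] at hx; linarith [not_le.1 hx]
    set rr := ‖x - w‖ with hrr
    have hq : rr - d₀ ≤ ‖x - b‖ := by
      have := dist_triangle x b w
      rw [dist_eq_norm, dist_eq_norm, dist_eq_norm] at this
      have hbw : ‖b - w‖ = ‖w - b‖ := norm_sub_rev b w
      rw [hrr, hd₀]; linarith [this, hbw.le, hbw.ge]
    have hKlt : (K : EReal) < φ x := by
      have hstep : ((B - C * rr + (1/2) * ‖x - b‖^2 : ℝ) : EReal) ≤ φ x := by
        rw [hφdef]; simp only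
        have h1 := hlow x
        calc ((B - C * rr + (1/2) * ‖x - b‖^2 : ℝ) : EReal)
            = ((B - C * rr : ℝ) : EReal) + (((1:ℝ)/2) * ‖x - b‖^2 : ℝ) := by
              rw [← EReal.coe_add]
          _ ≤ f x + (((1:ℝ)/2) * ‖x - b‖^2 : ℝ) := add_le_add_left h1 _
      refine lt_of_lt_of_le ?_ hstep
      rw [EReal.coe_lt_coe_iff]
      -- real inequality : K < B - C*rr + 1/2 ‖x-b‖²
      have hs1 : 2*C + 2*(K - B) + 2*C*d₀ + 1 ≤ rr - d₀ := by rw [hR] at hrx; linarith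
      have hq2 : (rr - d₀)^2 ≤ ‖x - b‖^2 := by
        have hs0 : (1:ℝ) ≤ rr - d₀ := by
          have h1 : (0:ℝ) ≤ C*d₀ := mul_nonneg hC (norm_nonneg _)
          linarith
        nlinarith [norm_nonneg (x - b)]
      exact prox_key_arith B C K d₀ rr ‖x - b‖ hC (norm_nonneg _) hKB hs1 hq2
    exact le_of_lt (lt_of_le_of_lt hφpK hKlt)

end Aux
section Part2
open Metric
variable {X : Type*} [NormedAddCommGroup X] [InnerProductSpace ℝ X]

lemma prox_subgrad {f : X → EReal} (hp : ProperFn f) (hc : ConvexFnE f) {p b : X}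
    (hpt : f p ≠ ⊤)
    (hmin : ∀ x, f p + ((((1:ℝ)/2) * ‖p - b‖ ^ 2 : ℝ) : EReal)
      ≤ f x + ((((1:ℝ)/2) * ‖x - b‖ ^ 2 : ℝ) : EReal)) :
    IsSubgrad f p (b - p) := by
  have hbot := hp.2
  intro y
  by_cases hy : f y = ⊤
  · rw [hy]; exact le_top
  set fp : ℝ := (f p).toReal with hfp'
  set fy : ℝ := (f y).toReal with hfy'
  have hfp : f p = (fp : EReal) := (EReal.coe_toReal hpt (hbot p)).symm
  have hfy : f y = (fy : EReal) := (EReal.coe_toReal hy (hbot y)).symm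
  have key : ∀ t : ℝ, 0 < t → t < 1 →
      0 ≤ (fy - fp) + ⟪p - b, y - p⟫ + t/2 * ‖y - p‖ ^ 2 := by
    intro t ht0 ht1
    have hcc := hc y p t ht0 ht1
    rw [hfp, hfy] at hcc
    have hcast : (t : EReal) * (fy : EReal) + ((1 - t : ℝ) : EReal) * (fp : EReal)
        = ((t * fy + (1 - t) * fp : ℝ) : EReal) := by
      rw [← EReal.coe_mul, ← EReal.coe_mul, ← EReal.coe_add]
    rw [hcast] at hcc
    have hmt : f (t • y + (1 - t) • p) ≠ ⊤ := fun hT => by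
      rw [hT] at hcc; exact absurd hcc (not_le.2 (EReal.coe_lt_top _))
    set fm : ℝ := (f (t • y + (1 - t) • p)).toReal with hfm'
    have hfm : f (t • y + (1 - t) • p) = (fm : EReal) :=
      (EReal.coe_toReal hmt (hbot _)).symm
    rw [hfm] at hcc
    have hccR : fm ≤ t * fy + (1 - t) * fp := by exact_mod_cast hcc
    have hmm := hmin (t • y + (1 - t) • p)
    rw [hfp, hfm, ← EReal.coe_add, ← EReal.coe_add] at hmm
    have hmmR : fp + (1:ℝ)/2 * ‖p - b‖ ^ 2
        ≤ fm + (1:ℝ)/2 * ‖t • y + (1 - t) • p - b‖ ^ 2 := by exact_mod_cast hmm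
    have hnorm : ‖t • y + (1 - t) • p - b‖ ^ 2
        = ‖p - b‖ ^ 2 + 2 * (t * ⟪p - b, y - p⟫) + t ^ 2 * ‖y - p‖ ^ 2 := by
      have he : t • y + (1 - t) • p - b = (p - b) + t • (y - p) := by module
      rw [he, norm_add_sq_real, real_inner_smul_right, norm_smul, Real.norm_eq_abs,
        abs_of_pos ht0, mul_pow]
    rw [hnorm] at hmmR
    have ht' : 0 ≤ t * ((fy - fp) + ⟪p - b, y - p⟫ + t/2 * ‖y - p‖ ^ 2) := by nlinarith
    nlinarith [ht', ht0]
  have hA : 0 ≤ (fy - fp) + ⟪p - b, y - p⟫ := by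
    by_contra hA
    push_neg at hA
    set A : ℝ := (fy - fp) + ⟪p - b, y - p⟫ with hAdef
    set N : ℝ := ‖y - p‖ ^ 2 with hN
    have hN0 : 0 ≤ N := by positivity
    set t : ℝ := min (1/2) (-A / (N + 1)) with htdef
    have ht0 : 0 < t := lt_min (by norm_num) (div_pos (by linarith) (by positivity))
    have ht1 : t < 1 := lt_of_le_of_lt (min_le_left _ _) (by norm_num)
    have hk := key t ht0 ht1
    have htA : t ≤ -A / (N + 1) := min_le_right _ _
    have h1 : t * N ≤ (-A / (N + 1)) * N := mul_le_mul_of_nonneg_right htA hN0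
    have h2 : (-A / (N + 1)) * N ≤ -A := by
      rw [div_mul_eq_mul_div, div_le_iff₀ (by positivity)]
      nlinarith
    nlinarith [h1, h2, hk]
  rw [hfp, hfy, ← EReal.coe_add]
  have hinner : ⟪b - p, y - p⟫ = -⟪p - b, y - p⟫ := by
    rw [show b - p = -(p - b) by abel, inner_neg_left]
  exact_mod_cast (by linarith [hA, hinner.le, hinner.ge] : fp + ⟪b - p, y - p⟫ ≤ fy)

lemma conj_eq {f : X → EReal} (hbot : ∀ x, f x ≠ ⊥) {p q : X} (hs : IsSubgrad f p q)
    (hpt : f p ≠ ⊤) :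
    fenchelConj f q = ((⟪q, p⟫ - (f p).toReal : ℝ) : EReal) := by
  set fp : ℝ := (f p).toReal with hfp'
  have hfp : f p = (fp : EReal) := (EReal.coe_toReal hpt (hbot p)).symm
  apply le_antisymm
  · apply iSup_le
    intro x
    by_cases hx : f x = ⊤
    · rw [hx]
      simp
    · have hsx := hs x
      set fx : ℝ := (f x).toReal with hfx'
      have hfx : f x = (fx : EReal) := (EReal.coe_toReal hx (hbot x)).symm
      rw [hfp, hfx, ← EReal.coe_add] at hsx
      have hsxR : fp + ⟪q, x - p⟫ ≤ fx := by exact_mod_cast hsx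
      rw [hfx, ← EReal.coe_sub]
      have hir : ⟪q, x - p⟫ = ⟪q, x⟫ - ⟪q, p⟫ := by rw [inner_sub_right]
      exact_mod_cast (by linarith [hir.le, hir.ge] : ⟪q, x⟫ - fx ≤ ⟪q, p⟫ - fp)
  · have h1 : ((⟪q, p⟫ : ℝ) : EReal) - f p ≤ fenchelConj f q :=
      le_iSup (fun x => ((⟪q, x⟫ : ℝ) : EReal) - f x) p
    rw [hfp, ← EReal.coe_sub] at h1
    exact h1

lemma conj_lower {f : X → EReal} (hbot : ∀ x, f x ≠ ⊥) {p : X}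
    (hpt : f p ≠ ⊤) (w : X) :
    ((⟪w, p⟫ - (f p).toReal : ℝ) : EReal) ≤ fenchelConj f w := by
  have h1 : ((⟪w, p⟫ : ℝ) : EReal) - f p ≤ fenchelConj f w :=
    le_iSup (fun x => ((⟪w, x⟫ : ℝ) : EReal) - f x) p
  rw [(EReal.coe_toReal hpt (hbot p)).symm, ← EReal.coe_sub] at h1
  exact h1

lemma dual_growth {f : X → EReal} (hp : ProperFn f) {p q b : X} (hs : IsSubgrad f p q)
    (hpt : f p ≠ ⊤) (hpb : p = b - q) (w : X) :
    fenchelConj f q + ((((1:ℝ)/2) * ‖b - q‖ ^ 2 : ℝ) : EReal)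
        + ((((1:ℝ)/2) * ‖w - q‖ ^ 2 : ℝ) : EReal)
      ≤ fenchelConj f w + ((((1:ℝ)/2) * ‖b - w‖ ^ 2 : ℝ) : EReal) := by
  have hbot := hp.2
  by_cases hw : fenchelConj f w = ⊤
  · rw [hw, EReal.top_add_of_ne_bot (EReal.coe_ne_bot _)]
    exact le_top
  have hwb : fenchelConj f w ≠ ⊥ := conj_ne_bot hp w
  set cw : ℝ := (fenchelConj f w).toReal with hcw'
  have hcw : fenchelConj f w = (cw : EReal) := (EReal.coe_toReal hw hwb).symm
  set fp : ℝ := (f p).toReal with hfp'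
  have h1 : ⟪w, p⟫ - fp ≤ cw := by
    have := conj_lower hbot hpt w
    rw [hcw] at this
    exact_mod_cast this
  rw [conj_eq hbot hs hpt, hcw, ← EReal.coe_add, ← EReal.coe_add, ← EReal.coe_add]
  have hbq : b - q = p := hpb.symm ▸ (by abel : b - q = b - q)
  have hbw : b - w = p - (w - q) := by rw [hpb]; abel
  have hnorm : ‖b - w‖ ^ 2 = ‖p‖ ^ 2 - 2 * ⟪p, w - q⟫ + ‖w - q‖ ^ 2 := by
    rw [hbw, show p - (w - q) = p + (-(w - q)) by abel, norm_add_sq_real,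
      inner_neg_right, norm_neg]
    ring
  have hinner : ⟪w - q, p⟫ = ⟪w, p⟫ - ⟪q, p⟫ := by rw [inner_sub_left]
  have hpq : ⟪p, w - q⟫ = ⟪w - q, p⟫ := real_inner_comm _ _
  have hbqn : ‖b - q‖ = ‖p‖ := by rw [hbq]
  apply EReal.coe_le_coe_iff.2
  rw [hbqn, hnorm]
  nlinarith [h1, hinner, hpq]

end Part2
theorem stmt12 {X : Type*} [NormedAddCommGroup X] [InnerProductSpace ℝ X] [FiniteDimensional ℝ X]
    (k : ℕ) (h : Fin k → X → EReal) (hp : ∀ i, ProperFn (h i))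
    (hl : ∀ i, LowerSemicontinuous (h i)) (hc : ∀ i, ConvexFnE (h i))
    (x₀ : X) (S : Finset (Fin k)) (z zstar : Fin k → X)
    (hmin : ∀ y : Fin k → X,
      (∑ i ∈ S, fenchelConj (h i) (zstar i))
          + ((((1:ℝ)/2) * ‖-(∑ i ∈ S, zstar i) - (∑ i ∈ Sᶜ, z i) + x₀‖^2 : ℝ) : EReal)
        ≤ (∑ i ∈ S, fenchelConj (h i) (y i))
          + ((((1:ℝ)/2) * ‖-(∑ i ∈ S, y i) - (∑ i ∈ Sᶜ, z i) + x₀‖^2 : ℝ) : EReal)) :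
    let xs : X := x₀ - (∑ i ∈ S, zstar i) - (∑ i ∈ Sᶜ, z i)
    let P : X → EReal := fun x =>
      (∑ i ∈ S, h i x) + ((((1:ℝ)/2) * ‖x - (x₀ - ∑ i ∈ Sᶜ, z i)‖^2 : ℝ) : EReal)
    (∀ x : X, P xs ≤ P x) ∧ (∀ x : X, (∀ y : X, P x ≤ P y) → x = xs) := by
  classical
  intro xs P
  have hbot : ∀ i x, h i x ≠ ⊥ := fun i => (hp i).2
  have hcnb : ∀ (i : Fin k) (w : X), fenchelConj (h i) w ≠ ⊥ := fun i w => conj_ne_bot (hp i) w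
  set a : X := x₀ - ∑ i ∈ Sᶜ, z i with ha
  have hxs : xs = a - ∑ i ∈ S, zstar i := by
    show x₀ - (∑ i ∈ S, zstar i) - (∑ i ∈ Sᶜ, z i) = a - ∑ i ∈ S, zstar i
    rw [ha]; abel
  have hP : ∀ v : X, P v = (∑ i ∈ S, h i v)
      + ((((1:ℝ)/2) * ‖v - a‖^2 : ℝ) : EReal) := fun v => rfl
  have hmin' : ∀ y : Fin k → X,
      (∑ i ∈ S, fenchelConj (h i) (zstar i))
          + ((((1:ℝ)/2) * ‖a - ∑ i ∈ S, zstar i‖^2 : ℝ) : EReal)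
        ≤ (∑ i ∈ S, fenchelConj (h i) (y i))
          + ((((1:ℝ)/2) * ‖a - ∑ i ∈ S, y i‖^2 : ℝ) : EReal) := by
    intro y
    have hv : ∀ w : X, -(w) - (∑ i ∈ Sᶜ, z i) + x₀ = a - w := fun w => by rw [ha]; abel
    have h0 := hmin y
    rwa [hv, hv] at h0
  -- finite witnesses for the conjugates
  have hgood : ∀ i : Fin k, ∃ w, fenchelConj (h i) w ≠ ⊤ := by
    intro i
    obtain ⟨p₀, hpt, hm⟩ := exists_prox (hp i) (hl i) (hc i) 0
    have hsub := prox_subgrad (hp i) (hc i) hpt hm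
    refine ⟨0 - p₀, ?_⟩
    rw [conj_eq (hp i).2 hsub hpt]
    exact EReal.coe_ne_top _
  choose w₀ hw₀ using hgood
  have h1 := hmin' w₀
  have hsumw : (∑ i ∈ S, fenchelConj (h i) (w₀ i))
      = (((∑ i ∈ S, (fenchelConj (h i) (w₀ i)).toReal) : ℝ) : EReal) :=
    ESum.sum_coe _ _ (fun i _ => ⟨hcnb i _, hw₀ i⟩)
  have hsumzt : (∑ i ∈ S, fenchelConj (h i) (zstar i)) ≠ ⊤ := by
    intro htop
    rw [htop, hsumw, ← EReal.coe_add, EReal.top_add_of_ne_bot (EReal.coe_ne_bot _)] at h1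
    exact absurd h1 (not_le.2 (EReal.coe_lt_top _))
  have hfin : ∀ j ∈ S, fenchelConj (h j) (zstar j) ≠ ⊤ :=
    fun j hj => ESum.term_ne_top hsumzt (fun i _ => hcnb i _) hj
  -- the key per-coordinate facts
  have hkey : ∀ j ∈ S, IsSubgrad (h j) xs (zstar j) ∧ h j xs ≠ ⊤ := by
    intro j hj
    set bj : X := a - ∑ i ∈ S.erase j, zstar i with hbj
    have hsumS : ∑ i ∈ S, zstar i = zstar j + ∑ i ∈ S.erase j, zstar i :=
      (Finset.add_sum_erase S zstar hj).symm
    have hbjz : bj - zstar j = a - ∑ i ∈ S, zstar i := by rw [hbj, hsumS]; abel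
    have hcj : fenchelConj (h j) (zstar j)
        = (((fenchelConj (h j) (zstar j)).toReal : ℝ) : EReal) :=
      (EReal.coe_toReal (hfin j hj) (hcnb j _)).symm
    have herase : ∀ i ∈ S.erase j,
        fenchelConj (h i) (zstar i) ≠ ⊥ ∧ fenchelConj (h i) (zstar i) ≠ ⊤ :=
      fun i hi => ⟨hcnb i _, hfin i (Finset.mem_of_mem_erase hi)⟩
    have hE : ∑ i ∈ S.erase j, fenchelConj (h i) (zstar i)
        = ((∑ i ∈ S.erase j, (fenchelConj (h i) (zstar i)).toReal : ℝ) : EReal) :=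
      ESum.sum_coe _ _ herase
    have hper : ∀ v : X,
        fenchelConj (h j) (zstar j) + ((((1:ℝ)/2) * ‖bj - zstar j‖ ^ 2 : ℝ) : EReal)
          ≤ fenchelConj (h j) v + ((((1:ℝ)/2) * ‖bj - v‖ ^ 2 : ℝ) : EReal) := by
      intro v
      by_cases hv : fenchelConj (h j) v = ⊤
      · rw [hv, EReal.top_add_of_ne_bot (EReal.coe_ne_bot _)]; exact le_top
      have hcv : fenchelConj (h j) v = (((fenchelConj (h j) v).toReal : ℝ) : EReal) :=
        (EReal.coe_toReal hv (hcnb j v)).symm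
      have h2 := hmin' (Function.update zstar j v)
      have hsc : ∑ i ∈ S, fenchelConj (h i) (Function.update zstar j v i)
          = fenchelConj (h j) v + ∑ i ∈ S.erase j, fenchelConj (h i) (zstar i) := by
        rw [← Finset.add_sum_erase _
          (fun i => fenchelConj (h i) (Function.update zstar j v i)) hj]
        congr 1
        · rw [Function.update_self]
        · exact Finset.sum_congr rfl
            (fun i hi => by rw [Function.update_of_ne (Finset.ne_of_mem_erase hi)])
      have hvc : ∑ i ∈ S, Function.update zstar j v i = v + ∑ i ∈ S.erase j, zstar i := by
        rw [← Finset.add_sum_erase _ (Function.update zstar j v) hj, Function.update_self]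
        congr 1
        exact Finset.sum_congr rfl
          (fun i hi => by rw [Function.update_of_ne (Finset.ne_of_mem_erase hi)])
      have hveq : a - (v + ∑ i ∈ S.erase j, zstar i) = bj - v := by rw [hbj]; abel
      rw [hsc, hvc, hveq, ← hbjz,
        ← Finset.add_sum_erase S (fun i => fenchelConj (h i) (zstar i)) hj,
        hE, hcj, hcv, ← EReal.coe_add, ← EReal.coe_add, ← EReal.coe_add, ← EReal.coe_add] at h2
      rw [hcj, hcv, ← EReal.coe_add, ← EReal.coe_add]
      have h2R : (fenchelConj (h j) (zstar j)).toReal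
            + (∑ i ∈ S.erase j, (fenchelConj (h i) (zstar i)).toReal)
            + (1:ℝ)/2 * ‖bj - zstar j‖ ^ 2
          ≤ (fenchelConj (h j) v).toReal
            + (∑ i ∈ S.erase j, (fenchelConj (h i) (zstar i)).toReal)
            + (1:ℝ)/2 * ‖bj - v‖ ^ 2 := by exact_mod_cast h2
      exact_mod_cast (by linarith : (fenchelConj (h j) (zstar j)).toReal
        + (1:ℝ)/2 * ‖bj - zstar j‖ ^ 2
        ≤ (fenchelConj (h j) v).toReal + (1:ℝ)/2 * ‖bj - v‖ ^ 2)
    obtain ⟨pj, hpjt, hpjm⟩ := exists_prox (hp j) (hl j) (hc j) bj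
    set qj : X := bj - pj with hqj
    have hsubj : IsSubgrad (h j) pj qj := by
      rw [hqj]; exact prox_subgrad (hp j) (hc j) hpjt hpjm
    have hpjeq : pj = bj - qj := by rw [hqj]; abel
    have hg := dual_growth (hp j) hsubj hpjt hpjeq (zstar j)
    have hcqve : fenchelConj (h j) qj ≠ ⊤ := by
      rw [conj_eq (hp j).2 hsubj hpjt]; exact EReal.coe_ne_top _
    have hcq : fenchelConj (h j) qj = (((fenchelConj (h j) qj).toReal : ℝ) : EReal) :=
      (EReal.coe_toReal hcqve (hcnb j _)).symm
    have hA := hper qj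
    rw [hcq, hcj, ← EReal.coe_add, ← EReal.coe_add, ← EReal.coe_add] at hg
    rw [hcq, hcj, ← EReal.coe_add, ← EReal.coe_add] at hA
    have hgR : (fenchelConj (h j) qj).toReal + (1:ℝ)/2 * ‖bj - qj‖ ^ 2
        + (1:ℝ)/2 * ‖zstar j - qj‖ ^ 2
        ≤ (fenchelConj (h j) (zstar j)).toReal + (1:ℝ)/2 * ‖bj - zstar j‖ ^ 2 := by
      exact_mod_cast hg
    have hAR : (fenchelConj (h j) (zstar j)).toReal + (1:ℝ)/2 * ‖bj - zstar j‖ ^ 2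
        ≤ (fenchelConj (h j) qj).toReal + (1:ℝ)/2 * ‖bj - qj‖ ^ 2 := by
      exact_mod_cast hA
    have hz : zstar j = qj := by
      have hn : ‖zstar j - qj‖ = 0 := by nlinarith [norm_nonneg (zstar j - qj)]
      exact sub_eq_zero.1 (norm_eq_zero.1 hn)
    have hpxs : pj = xs := by rw [hpjeq, ← hz, hbjz, hxs]
    constructor
    · rw [← hpxs, hz]; exact hsubj
    · rw [← hpxs]; exact hpjt
  have hsub_all : ∀ j ∈ S, IsSubgrad (h j) xs (zstar j) := fun j hj => (hkey j hj).1
  have htop_all : ∀ j ∈ S, h j xs ≠ ⊤ := fun j hj => (hkey j hj).2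
  have hPxs : P xs = (((∑ j ∈ S, (h j xs).toReal) + (1:ℝ)/2 * ‖xs - a‖ ^ 2 : ℝ) : EReal) := by
    rw [hP xs, ESum.sum_coe S (fun i => h i xs) (fun i hi => ⟨hbot i xs, htop_all i hi⟩),
      ← EReal.coe_add]
  have hgrow : ∀ x : X, P xs + ((((1:ℝ)/2) * ‖x - xs‖ ^ 2 : ℝ) : EReal) ≤ P x := by
    intro x
    by_cases hxt : ∀ i ∈ S, h i x ≠ ⊤
    · have hsx : ∑ i ∈ S, h i x = ((∑ i ∈ S, (h i x).toReal : ℝ) : EReal) :=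
        ESum.sum_coe _ _ (fun i hi => ⟨hbot i x, hxt i hi⟩)
      rw [hP x, hsx, hPxs, ← EReal.coe_add, ← EReal.coe_add]
      apply EReal.coe_le_coe_iff.2
      have hterm : ∀ i ∈ S, (h i xs).toReal + ⟪zstar i, x - xs⟫ ≤ (h i x).toReal := by
        intro i hi
        have hsi := hsub_all i hi x
        rw [(EReal.coe_toReal (htop_all i hi) (hbot i xs)).symm,
          (EReal.coe_toReal (hxt i hi) (hbot i x)).symm, ← EReal.coe_add] at hsi
        exact_mod_cast hsi
      have hsum := Finset.sum_le_sum hterm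
      rw [Finset.sum_add_distrib] at hsum
      have hinner_sum : ∑ i ∈ S, ⟪zstar i, x - xs⟫ = ⟪∑ i ∈ S, zstar i, x - xs⟫ :=
        (sum_inner S zstar (x - xs)).symm
      rw [hinner_sum] at hsum
      have hquad : ‖x - a‖ ^ 2 = ‖x - xs‖ ^ 2 + 2 * ⟪x - xs, xs - a⟫ + ‖xs - a‖ ^ 2 := by
        rw [show x - a = (x - xs) + (xs - a) by abel, norm_add_sq_real]
      have hxsa : xs - a = -(∑ i ∈ S, zstar i) := by rw [hxs]; abel
      have hia : ⟪x - xs, xs - a⟫ = -⟪∑ i ∈ S, zstar i, x - xs⟫ := by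
        rw [hxsa, inner_neg_right, real_inner_comm]
      linarith [hsum, hquad, hia]
    · push_neg at hxt
      obtain ⟨i, hi, hT⟩ := hxt
      have hPx : P x = ⊤ := by
        rw [hP x, ESum.sum_eq_top S _ (fun i _ => hbot i x) hi hT]
        exact EReal.top_add_of_ne_bot (EReal.coe_ne_bot _)
      rw [hPx]; exact le_top
  constructor
  · intro x
    refine le_trans ?_ (hgrow x)
    rw [hPxs, ← EReal.coe_add]
    apply EReal.coe_le_coe_iff.2
    nlinarith [norm_nonneg (x - xs), sq_nonneg ‖x - xs‖]
  · intro x hxmin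
    have h0 := hxmin xs
    have hgr := hgrow x
    have hxt : ∀ i ∈ S, h i x ≠ ⊤ := by
      intro i hi hT
      have hPx : P x = ⊤ := by
        rw [hP x, ESum.sum_eq_top S _ (fun i _ => hbot i x) hi hT]
        exact EReal.top_add_of_ne_bot (EReal.coe_ne_bot _)
      rw [hPx, hPxs] at h0
      exact absurd h0 (not_le.2 (EReal.coe_lt_top _))
    have hfinPx : P x = ((((∑ i ∈ S, (h i x).toReal) + (1:ℝ)/2 * ‖x - a‖ ^ 2 : ℝ)) : EReal) := by
      rw [hP x, ESum.sum_coe S (fun i => h i x) (fun i hi => ⟨hbot i x, hxt i hi⟩),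
        ← EReal.coe_add]
    rw [hPxs, hfinPx, ← EReal.coe_add] at hgr
    rw [hPxs, hfinPx] at h0
    have hgrR : ((∑ j ∈ S, (h j xs).toReal) + (1:ℝ)/2 * ‖xs - a‖ ^ 2) + (1:ℝ)/2 * ‖x - xs‖ ^ 2
        ≤ (∑ i ∈ S, (h i x).toReal) + (1:ℝ)/2 * ‖x - a‖ ^ 2 := by exact_mod_cast hgr
    have h0R : (∑ i ∈ S, (h i x).toReal) + (1:ℝ)/2 * ‖x - a‖ ^ 2
        ≤ (∑ j ∈ S, (h j xs).toReal) + (1:ℝ)/2 * ‖xs - a‖ ^ 2 := by exact_mod_cast h0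
    have hn : ‖x - xs‖ = 0 := by nlinarith [norm_nonneg (x - xs)]
    exact sub_eq_zero.1 (norm_eq_zero.1 hn)
end

section
/- Conversely to the previous: let h₁,…,h_k be proper closed convex on X, S ⊆ {1,…,k}, fix {z_i}_{i∉S} and x₀ ∈ X. Suppose x* minimizes x ↦ Σ_{i∈S} h_i(x) + ½‖x − (x₀ − Σ_{i∉S} z_i)‖² and there exist {z̃_i}_{i∈S} with z̃_i ∈ ∂h_i(x*) for each i ∈ S and x* − x₀ + Σ_{i∉S} z_i + Σ_{i∈S} z̃_i = 0. Then {z̃_i}_{i∈S} minimizes Σ_{i∈S} h_i*(z_i) + ½‖−Σ_{i∈S} z_i − Σ_{i∉S} z_i + x₀‖². -/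
open RealInnerProductSpace Filter Topology


section helpers

variable {X : Type*} [NormedAddCommGroup X] [InnerProductSpace ℝ X]

lemma ecoe_sum {ι : Type*} (s : Finset ι) (f : ι → ℝ) :
    ((∑ i ∈ s, f i : ℝ) : EReal) = ∑ i ∈ s, ((f i : ℝ) : EReal) := by
  classical
  induction s using Finset.cons_induction with
  | empty => simp
  | cons i s hi ih => rw [Finset.sum_cons, Finset.sum_cons, ← ih, EReal.coe_add]

lemma subgrad_finite {f : X → EReal} (hp : (∃ x, f x ≠ ⊤) ∧ ∀ x, f x ≠ ⊥)
    {x z : X} (hs : ∀ y : X, f x + ((⟪z, y - x⟫ : ℝ) : EReal) ≤ f y) :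
    ∃ a : ℝ, f x = (a : EReal) := by
  refine ⟨(f x).toReal, ?_⟩
  rcases hp.1 with ⟨w, hw⟩
  have hne : f x ≠ ⊤ := by
    intro htop
    have := hs w
    rw [htop, EReal.top_add_coe] at this
    exact hw (top_le_iff.mp this)
  exact (EReal.coe_toReal hne (hp.2 x)).symm

end helpers

theorem stmt13 {X : Type*} [NormedAddCommGroup X] [InnerProductSpace ℝ X] [FiniteDimensional ℝ X]
    (k : ℕ) (h : Fin k → X → EReal) (hp : ∀ i, ProperFn (h i))
    (hl : ∀ i, LowerSemicontinuous (h i)) (hc : ∀ i, ConvexFnE (h i))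
    (x₀ : X) (S : Finset (Fin k)) (z : Fin k → X) (xstar : X) (zt : Fin k → X)
    (hxmin : ∀ x : X,
      (∑ i ∈ S, h i xstar) + ((((1:ℝ)/2) * ‖xstar - (x₀ - ∑ i ∈ Sᶜ, z i)‖^2 : ℝ) : EReal)
        ≤ (∑ i ∈ S, h i x) + ((((1:ℝ)/2) * ‖x - (x₀ - ∑ i ∈ Sᶜ, z i)‖^2 : ℝ) : EReal))
    (hsub : ∀ i ∈ S, IsSubgrad (h i) xstar (zt i))
    (heq : xstar - x₀ + (∑ i ∈ Sᶜ, z i) + (∑ i ∈ S, zt i) = 0) :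
    ∀ y : Fin k → X,
      (∑ i ∈ S, fenchelConj (h i) (zt i))
          + ((((1:ℝ)/2) * ‖-(∑ i ∈ S, zt i) - (∑ i ∈ Sᶜ, z i) + x₀‖^2 : ℝ) : EReal)
        ≤ (∑ i ∈ S, fenchelConj (h i) (y i))
          + ((((1:ℝ)/2) * ‖-(∑ i ∈ S, y i) - (∑ i ∈ Sᶜ, z i) + x₀‖^2 : ℝ) : EReal) := by
  intro y
  classical
  have hfin : ∀ i ∈ S, ∃ a : ℝ, h i xstar = (a : EReal) := fun i hi =>
    subgrad_finite (hp i) (hsub i hi)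
  choose! a ha using hfin
  -- exact value of the conjugate at zt i
  have hconjzt : ∀ i ∈ S, fenchelConj (h i) (zt i)
      = (((⟪zt i, xstar⟫ : ℝ) - a i : ℝ) : EReal) := by
    intro i hi
    apply le_antisymm
    · refine iSup_le fun x => ?_
      rcases eq_or_ne (h i x) ⊤ with htop | hne
      · rw [htop]
        simp [sub_eq_add_neg, EReal.add_bot]
      · have hxr : h i x = ((h i x).toReal : EReal) :=
          (EReal.coe_toReal hne ((hp i).2 x)).symm
        have hsg := hsub i hi x
        rw [ha i hi, hxr, ← EReal.coe_add] at hsg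
        rw [hxr, ← EReal.coe_sub]
        rw [EReal.coe_le_coe_iff] at hsg ⊢
        have hisub : ⟪zt i, x - xstar⟫ = ⟪zt i, x⟫ - ⟪zt i, xstar⟫ := inner_sub_right _ _ _
        rw [hisub] at hsg
        linarith
    · have := le_iSup (fun x => ((⟪zt i, x⟫ : ℝ) : EReal) - h i x) xstar
      rw [ha i hi, ← EReal.coe_sub] at this
      exact this
  -- Fenchel–Young lower bound at y i
  have hconjy : ∀ i ∈ S, (((⟪y i, xstar⟫ : ℝ) - a i : ℝ) : EReal)
      ≤ fenchelConj (h i) (y i) := by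
    intro i hi
    have := le_iSup (fun x => ((⟪y i, x⟫ : ℝ) : EReal) - h i x) xstar
    rw [ha i hi, ← EReal.coe_sub] at this
    exact this
  set A : X := ∑ i ∈ S, zt i with hA
  set W : X := ∑ i ∈ S, y i with hW
  set Z : X := ∑ i ∈ Sᶜ, z i with hZ
  have hx : xstar = -A - Z + x₀ := by
    have h2 := heq
    rw [show xstar - x₀ + Z + A = xstar - (-A - Z + x₀) by abel] at h2
    exact sub_eq_zero.mp h2
  -- rewrite LHS sum
  have hL : ∑ i ∈ S, fenchelConj (h i) (zt i)
      = ((∑ i ∈ S, ((⟪zt i, xstar⟫ : ℝ) - a i) : ℝ) : EReal) := by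
    rw [ecoe_sum]
    exact Finset.sum_congr rfl hconjzt
  have hR : ((∑ i ∈ S, ((⟪y i, xstar⟫ : ℝ) - a i) : ℝ) : EReal)
      ≤ ∑ i ∈ S, fenchelConj (h i) (y i) := by
    rw [ecoe_sum]
    exact Finset.sum_le_sum hconjy
  rw [hL, ← EReal.coe_add]
  calc ((((∑ i ∈ S, ((⟪zt i, xstar⟫ : ℝ) - a i)) + (1/2) * ‖-A - Z + x₀‖^2 : ℝ)) : EReal)
      ≤ (((∑ i ∈ S, ((⟪y i, xstar⟫ : ℝ) - a i)) + (1/2) * ‖-W - Z + x₀‖^2 : ℝ) : EReal) := by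
        rw [EReal.coe_le_coe_iff]
        have hAx : ∑ i ∈ S, (⟪zt i, xstar⟫ : ℝ) = ⟪A, xstar⟫ := (sum_inner S _ _).symm
        have hWx : ∑ i ∈ S, (⟪y i, xstar⟫ : ℝ) = ⟪W, xstar⟫ := (sum_inner S _ _).symm
        rw [Finset.sum_sub_distrib, Finset.sum_sub_distrib, hAx, hWx, ← hx]
        have hv : -W - Z + x₀ = xstar + (A - W) := by rw [hx]; abel
        rw [hv]
        have hn : ‖xstar + (A - W)‖^2
            = ‖xstar‖^2 + 2 * ⟪xstar, A - W⟫ + ‖A - W‖^2 := norm_add_sq_real _ _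
        have h1 : ⟪A, xstar⟫ - ⟪W, xstar⟫ = ⟪xstar, A - W⟫ := by
          rw [inner_sub_right, real_inner_comm xstar A, real_inner_comm xstar W]
        nlinarith [sq_nonneg ‖A - W‖, h1, hn]
    _ ≤ (∑ i ∈ S, fenchelConj (h i) (y i))
          + ((((1:ℝ)/2) * ‖-W - Z + x₀‖^2 : ℝ) : EReal) := by
        rw [EReal.coe_add]
        exact add_le_add_left hR _
end
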